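/- Let q be a prime power with q ≥ d_0 k_0 + 1, and let (k_i), (d_i) be nondecreasing sequences of positive integers with q^{2^i} ≥ d_{i+1} k_{i+1} + 1 for all i ≥ 0. Then the sequence of polynomial-based CFF matrices C_{q^{2^i}, k_i, d_i} (over the tower of fields F_{q^{2^i}}) forms an embedding family: each matrix is a d_i-CFF((d_i k_i + 1) q^{2^i}, q^{2^i (k_i+1)}) and, after suitable row/column permutations, each appears as the top-left submatrix of the next. -/

import Mathlib

/-- Evaluation of the polynomial with coefficient vector `c` (degree at most `k`) at `x`. -/
def polyEval {F : Type*} [CommSemiring F] {k : ℕ} (c : Fin (k + 1) → F) (x : F) : F :=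
  ∑ i : Fin (k + 1), c i * x ^ (i : ℕ)

/-- A (Prop-valued) binary matrix `M` is the incidence matrix of a `d`-cover-free family. -/
def MatCFF {R C : Type*} (d : ℕ) (M : R → C → Prop) : Prop :=
  ∀ c₀ : C, ∀ S : Finset C, c₀ ∉ S → S.card ≤ d →
    ∃ r, M r c₀ ∧ ∀ c ∈ S, ¬ M r c

open Polynomial Finset in
lemma agree_card {F : Type*} [Field F] [DecidableEq F] {k : ℕ} {c c₀ : Fin (k+1) → F}
    (h : c ≠ c₀) (X : Finset F) :
    (X.filter fun x => polyEval c x = polyEval c₀ x).card ≤ k := by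
  classical
  set p : F[X] := ∑ i : Fin (k+1), Polynomial.C (c i - c₀ i) * Polynomial.X ^ (i:ℕ) with hp
  have hcoeff : ∀ j : Fin (k+1), p.coeff (j : ℕ) = c j - c₀ j := by
    intro j
    rw [hp, Polynomial.finset_sum_coeff]
    simp only [Polynomial.coeff_C_mul, Polynomial.coeff_X_pow]
    rw [Finset.sum_eq_single j]
    · simp
    · intro b _ hb
      rw [if_neg, mul_zero]
      exact fun hv => hb (Fin.ext hv.symm)
    · simp
  have hp0 : p ≠ 0 := by
    obtain ⟨j, hj⟩ : ∃ j, c j ≠ c₀ j := by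
      by_contra hc; push_neg at hc; exact h (funext hc)
    intro h0
    apply hj
    have := hcoeff j
    rw [h0] at this
    simpa [sub_eq_zero] using this.symm
  have hdeg : p.natDegree ≤ k := by
    apply Polynomial.natDegree_sum_le_of_forall_le
    intro i _
    apply le_trans (Polynomial.natDegree_C_mul_le _ _)
    simpa using i.is_le
  have heval : ∀ x, p.eval x = polyEval c x - polyEval c₀ x := by
    intro x
    simp [hp, polyEval, Polynomial.eval_finset_sum, sub_mul, Finset.sum_sub_distrib]
  have hsub : (X.filter fun x => polyEval c x = polyEval c₀ x) ⊆ p.roots.toFinset := by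
    intro x hx
    rw [Finset.mem_filter] at hx
    rw [Multiset.mem_toFinset, Polynomial.mem_roots hp0, IsRoot]
    rw [heval, hx.2, sub_self]
  calc (X.filter fun x => polyEval c x = polyEval c₀ x).card
      ≤ p.roots.toFinset.card := Finset.card_le_card hsub
    _ ≤ Multiset.card p.roots := Multiset.toFinset_card_le _
    _ ≤ p.natDegree := Polynomial.card_roots' p
    _ ≤ k := hdeg

open Polynomial Finset in
lemma cff_poly {F : Type*} [Field F] [Fintype F] {k d : ℕ} (xs : Fin (d*k+1) ↪ F) :
    MatCFF d (fun (r : Fin (d*k+1) × F) (c : Fin (k+1) → F) =>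
      polyEval c (xs r.1) = r.2) := by
  classical
  intro c₀ S hc₀ hS
  set X : Finset F := Finset.univ.map xs with hX
  have hXcard : X.card = d*k+1 := by simp [hX]
  set B : Finset F := S.biUnion (fun c => X.filter fun x => polyEval c x = polyEval c₀ x)
    with hB
  have hBcard : B.card ≤ d * k := by
    calc B.card ≤ ∑ c ∈ S, (X.filter fun x => polyEval c x = polyEval c₀ x).card :=
          Finset.card_biUnion_le
      _ ≤ ∑ _c ∈ S, k := by
          apply Finset.sum_le_sum
          intro c hc
          exact agree_card (fun hcc => hc₀ (by rwa [hcc] at hc)) X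
      _ = S.card * k := by rw [Finset.sum_const, smul_eq_mul]
      _ ≤ d * k := Nat.mul_le_mul_right _ hS
  have : ∃ x ∈ X, x ∉ B := by
    by_contra hcon
    push_neg at hcon
    have : X ⊆ B := hcon
    have := Finset.card_le_card this
    omega
  obtain ⟨x, hxX, hxB⟩ := this
  obtain ⟨r1, _, hr1⟩ := Finset.mem_map.mp hxX
  refine ⟨(r1, polyEval c₀ x), ?_, ?_⟩
  · simp only [hr1]
  intro c hc hcontra
  apply hxB
  rw [hB, Finset.mem_biUnion]
  refine ⟨c, hc, Finset.mem_filter.mpr ⟨hxX, ?_⟩⟩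
  simpa [hr1] using hcontra

open Finset in
lemma embed_extend {n m : ℕ} (h : n ≤ m) {F : Type*} [Fintype F] [DecidableEq F]
    (hm : m ≤ Fintype.card F) (f : Fin n ↪ F) :
    ∃ g : Fin m ↪ F, ∀ j : Fin n, g (Fin.castLE h j) = f j := by
  classical
  set T : Finset F := Finset.univ \ Finset.univ.map f with hT
  have hTcard : m - n ≤ T.card := by
    have : T.card = Fintype.card F - n := by
      rw [hT, Finset.card_sdiff_of_subset (Finset.subset_univ _)]
      simp
    omega
  have : Nonempty (Fin (m-n) ↪ {x // x ∈ T}) := by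
    apply Function.Embedding.nonempty_of_card_le
    simpa using hTcard
  obtain ⟨e⟩ := this
  refine ⟨⟨fun j => if h2 : (j:ℕ) < n then f ⟨j, h2⟩ else
    (e ⟨(j:ℕ) - n, by omega⟩ : F), ?_⟩, ?_⟩
  · intro j1 j2 hj
    simp only at hj
    by_cases h1 : (j1:ℕ) < n <;> by_cases h2 : (j2:ℕ) < n
    · rw [dif_pos h1, dif_pos h2] at hj
      have h3 := f.injective hj
      rw [Fin.mk.injEq] at h3
      exact Fin.ext h3
    · rw [dif_pos h1, dif_neg h2] at hj
      exfalso
      have hmem := (e ⟨(j2:ℕ) - n, by omega⟩).2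
      rw [← hj] at hmem
      rw [hT, Finset.mem_sdiff] at hmem
      exact hmem.2 (by simp)
    · rw [dif_neg h1, dif_pos h2] at hj
      exfalso
      have hmem := (e ⟨(j1:ℕ) - n, by omega⟩).2
      rw [hj] at hmem
      rw [hT, Finset.mem_sdiff] at hmem
      exact hmem.2 (by simp)
    · rw [dif_neg h1, dif_neg h2] at hj
      have h3 := congrArg Fin.val (e.injective (Subtype.ext hj))
      simp only at h3
      exact Fin.ext (by omega)
  · intro j
    exact dif_pos j.isLt

lemma polyEval_comp {F G : Type*} [CommSemiring F] [CommSemiring G] (φ : F →+* G)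
    {k k' : ℕ} (hk : k ≤ k') (c : Fin (k+1) → F) (x : F) :
    polyEval (fun j : Fin (k'+1) => if h : (j:ℕ) < k+1 then φ (c ⟨j,h⟩) else 0) (φ x)
      = φ (polyEval c x) := by
  unfold polyEval
  rw [map_sum]
  rw [Fin.sum_univ_eq_sum_range (fun j => (if h : j < k+1 then φ (c ⟨j,h⟩) else 0) * (φ x)^j)]
  rw [← Finset.sum_subset (Finset.range_subset_range.mpr (by omega : k+1 ≤ k'+1))
    (by intro j _ hj
        rw [Finset.mem_range] at hj
        rw [dif_neg hj, zero_mul])]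
  rw [← Fin.sum_univ_eq_sum_range (fun j => (if h : j < k+1 then φ (c ⟨j,h⟩) else 0) * (φ x)^j)]
  apply Finset.sum_congr rfl
  intro i _
  rw [dif_pos i.isLt, map_mul, map_pow]

theorem stmt5 (q : ℕ) (hq : IsPrimePow q) (k d : ℕ → ℕ)
    (hk : ∀ i, 1 ≤ k i) (hd : ∀ i, 1 ≤ d i)
    (hkm : ∀ i, k i ≤ k (i + 1)) (hdm : ∀ i, d i ≤ d (i + 1))
    (h0 : d 0 * k 0 + 1 ≤ q)
    (hgrow : ∀ i, d (i + 1) * k (i + 1) + 1 ≤ q ^ (2 ^ i))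
    -- the tower of fields `F_{q^{2^i}}`
    (F : ℕ → Type*) [∀ i, Field (F i)] [∀ i, Fintype (F i)]
    (hF : ∀ i, Fintype.card (F i) = q ^ (2 ^ i))
    (φ : ∀ i, F i →+* F (i + 1)) :
    ∃ xs : ∀ i, Fin (d i * k i + 1) ↪ F i,
      -- each matrix `C_{q^{2^i}, k_i, d_i}` is a `d_i`-CFF((d_i k_i + 1) q^{2^i}, q^{2^i(k_i+1)})
      (∀ i, MatCFF (d i)
        (fun (r : Fin (d i * k i + 1) × F i) (c : Fin (k i + 1) → F i) =>
          polyEval c (xs i r.1) = r.2)) ∧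
      (∀ i, Fintype.card (Fin (d i * k i + 1) × F i) = (d i * k i + 1) * q ^ (2 ^ i) ∧
            Fintype.card (Fin (k i + 1) → F i) = q ^ (2 ^ i * (k i + 1))) ∧
      -- each matrix appears as the top-left submatrix of the next,
      -- after suitable row/column permutations
      (∀ i, ∃ (ρ : (Fin (d i * k i + 1) × F i) → (Fin (d (i+1) * k (i+1) + 1) × F (i+1)))
            (σ : (Fin (k i + 1) → F i) → (Fin (k (i+1) + 1) → F (i+1))),
          Function.Injective ρ ∧ Function.Injective σ ∧
          ∀ r c, (polyEval (σ c) (xs (i+1) (ρ r).1) = (ρ r).2) ↔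
                 (polyEval c (xs i r.1) = r.2)) := by
  classical
  have hq1 : 1 ≤ q := hq.two_le.trans' (by norm_num)
  have hcard : ∀ i, d i * k i + 1 ≤ Fintype.card (F i) := by
    intro i
    rw [hF]
    cases i with
    | zero => simpa using h0
    | succ i =>
        exact le_trans (hgrow i) (Nat.pow_le_pow_right hq1
          (Nat.pow_le_pow_right (by norm_num) (Nat.le_succ i)))
  have hle : ∀ i, d i * k i + 1 ≤ d (i+1) * k (i+1) + 1 :=
    fun i => Nat.succ_le_succ (Nat.mul_le_mul (hdm i) (hkm i))
  have key : ∀ i (f : Fin (d i * k i + 1) ↪ F i),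
      ∃ g : Fin (d (i+1) * k (i+1) + 1) ↪ F (i+1),
        ∀ j, g (Fin.castLE (hle i) j) = φ i (f j) :=
    fun i f => embed_extend (hle i) (hcard (i+1))
      (f.trans ⟨φ i, (φ i).injective⟩)
  obtain ⟨x0⟩ : Nonempty (Fin (d 0 * k 0 + 1) ↪ F 0) :=
    Function.Embedding.nonempty_of_card_le (by simpa using hcard 0)
  set xs : ∀ i, Fin (d i * k i + 1) ↪ F i :=
    fun i => Nat.rec x0 (fun i f => (key i f).choose) i with hxsdef
  have hxs : ∀ i j, xs (i+1) (Fin.castLE (hle i) j) = φ i (xs i j) :=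
    fun i => (key i (xs i)).choose_spec
  refine ⟨xs, fun i => cff_poly (xs i), ?_, ?_⟩
  · intro i
    constructor
    · simp [hF]
    · rw [Fintype.card_fun, hF, Fintype.card_fin, ← pow_mul]
  · intro i
    refine ⟨fun r => (Fin.castLE (hle i) r.1, φ i r.2),
      fun c => fun j => if h : (j:ℕ) < k i + 1 then φ i (c ⟨j, h⟩) else 0,
      ?_, ?_, ?_⟩
    · intro a b hab
      rw [Prod.mk.injEq] at hab
      exact Prod.ext (Fin.castLE_injective _ hab.1) ((φ i).injective hab.2)
    · intro c c' hcc
      funext j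
      have := congrFun hcc (Fin.castLE (Nat.succ_le_succ (hkm i)) j)
      simp only [Fin.coe_castLE, dif_pos j.isLt] at this
      exact (φ i).injective (by simpa using this)
    · intro r c
      simp only
      rw [hxs i r.1, polyEval_comp (φ i) (hkm i)]
      exact ⟨fun h => (φ i).injective h, fun h => by rw [h]⟩
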